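/- Let ω₁, ω₂ be nonzero real numbers such that ω₁/ω₂ is irrational, and let f : ℝ × ℝ → ℝ be continuous and 2π-periodic in each of its two arguments. Then lim_{T→+∞} (1/T) ∫₀ᵀ f(ω₁ t, ω₂ t) dt = (1/(4π²)) ∫₀^{2π} ∫₀^{2π} f(ψ₁, ψ₂) dψ₁ dψ₂. -/

import Mathlib

open Filter Real intervalIntegral

noncomputable section TAhelp

abbrev TA.T2 := AddCircle (2 * Real.pi) × AddCircle (2 * Real.pi)

namespace TA

def lift2 (g : ℝ → ℝ → ℂ) (h1 : ∀ x y, g (x + 2 * Real.pi) y = g x y)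
    (h2 : ∀ x y, g x (y + 2 * Real.pi) = g x y) : T2 → ℂ := fun p =>
  Function.Periodic.lift (f := fun x => Function.Periodic.lift (f := g x) (h2 x) p.2)
    (by
      intro x
      induction p.2 using QuotientAddGroup.induction_on with
      | H y => exact h1 x y) p.1

@[simp] lemma lift2_coe (g : ℝ → ℝ → ℂ) (h1 : ∀ x y, g (x + 2 * Real.pi) y = g x y)
    (h2 : ∀ x y, g x (y + 2 * Real.pi) = g x y) (x y : ℝ) :
    lift2 g h1 h2 (↑x, ↑y) = g x y := by
  simp [lift2, Function.Periodic.lift_coe]; rfl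

lemma lift2_continuous (g : ℝ → ℝ → ℂ) (h1 : ∀ x y, g (x + 2 * Real.pi) y = g x y)
    (h2 : ∀ x y, g x (y + 2 * Real.pi) = g x y) (hg : Continuous (Function.uncurry g)) :
    Continuous (lift2 g h1 h2) := by
  have hq : IsOpenQuotientMap (fun p : ℝ × ℝ => ((↑p.1 : AddCircle (2 * Real.pi)), (↑p.2 : AddCircle (2 * Real.pi)))) :=
    (QuotientAddGroup.isOpenQuotientMap_mk).prodMap (QuotientAddGroup.isOpenQuotientMap_mk)
  rw [← hq.continuous_comp_iff]
  have : (lift2 g h1 h2 ∘ fun p : ℝ × ℝ => ((↑p.1 : AddCircle (2 * Real.pi)), (↑p.2 : AddCircle (2 * Real.pi)))) = Function.uncurry g := by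
    ext ⟨x, y⟩
    simp [Function.uncurry, Function.comp]
  rw [this]; exact hg



lemma integral_exp_line (a : ℝ) (ha : a ≠ 0) (S T : ℝ) :
    ∫ t in S..T, Complex.exp (a * t * Complex.I)
      = (Complex.exp (a * T * Complex.I) - Complex.exp (a * S * Complex.I)) / (a * Complex.I) := by
  have hc : (a : ℂ) * Complex.I ≠ 0 := by
    simp [Complex.ext_iff, ha]
  have := integral_exp_mul_complex (a := S) (b := T) hc
  rw [show ∀ T:ℝ, (a:ℂ) * T * Complex.I = (a:ℂ) * Complex.I * T from fun T => by ring] at *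
  simp_rw [show ∀ t:ℝ, (a:ℂ) * (t:ℝ) * Complex.I = (a:ℂ) * Complex.I * t from fun t => by ring]
  exact this

lemma tendsto_avg_exp {a : ℝ} (ha : a ≠ 0) :
    Tendsto (fun T : ℝ => (1 / T : ℝ) • ∫ t in (0:ℝ)..T, Complex.exp (a * t * Complex.I))
      atTop (nhds 0) := by
  apply squeeze_zero_norm' (a := fun T : ℝ => (2 / |a|) * (1 / T))
  · filter_upwards [eventually_gt_atTop (0:ℝ)] with T hT
    rw [integral_exp_line a ha]
    have h1 : ‖Complex.exp (a * T * Complex.I) - Complex.exp (a * 0 * Complex.I)‖ ≤ 2 := by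
      calc ‖Complex.exp (a * T * Complex.I) - Complex.exp (a * 0 * Complex.I)‖
          ≤ ‖Complex.exp (a * T * Complex.I)‖ + ‖Complex.exp (a * 0 * Complex.I)‖ :=
            norm_sub_le _ _
        _ ≤ 2 := by
            rw [show (a : ℂ) * T * Complex.I = ((a * T : ℝ) : ℂ) * Complex.I by push_cast; ring,
              show (a : ℂ) * 0 * Complex.I = ((a * 0 : ℝ) : ℂ) * Complex.I by push_cast; ring]
            rw [Complex.norm_exp_ofReal_mul_I, Complex.norm_exp_ofReal_mul_I]
            norm_num
    have h2 : ‖(a : ℂ) * Complex.I‖ = |a| := by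
      simp
    have h3 : ‖(Complex.exp (a * T * Complex.I) - Complex.exp (a * 0 * Complex.I)) / ((a:ℂ) * Complex.I)‖ ≤ 2 / |a| := by
      rw [norm_div, h2]
      gcongr
    have h4 : ‖(1/T : ℝ)‖ = 1/T := by rw [Real.norm_eq_abs, abs_of_pos (by positivity)]
    calc ‖(1/T : ℝ) • ((Complex.exp (a * T * Complex.I) - Complex.exp (a * 0 * Complex.I)) / ((a:ℂ) * Complex.I))‖
        = (1/T) * ‖(Complex.exp (a * T * Complex.I) - Complex.exp (a * 0 * Complex.I)) / ((a:ℂ) * Complex.I)‖ := by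
          rw [norm_smul, h4]
      _ ≤ (1/T) * (2 / |a|) := by gcongr
      _ = 2 / |a| * (1/T) := by ring
  · have := Tendsto.const_mul (2 / |a|) (tendsto_inv_atTop_zero (𝕜 := ℝ))
    simpa [one_div] using this

lemma integral_exp_int (m : ℤ) (hm : m ≠ 0) :
    ∫ x in (0:ℝ)..(2 * Real.pi), Complex.exp ((m : ℝ) * x * Complex.I) = 0 := by
  rw [integral_exp_line _ (by exact_mod_cast hm)]
  have h1 : ((m : ℝ) : ℂ) * (2 * Real.pi) * Complex.I = (m : ℂ) * (2 * Real.pi * Complex.I) := by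
    push_cast; ring
  have h2 : ((m:ℝ):ℂ) * ((2 * Real.pi : ℝ):ℂ) * Complex.I = (m : ℂ) * (2 * Real.pi * Complex.I) := by
    push_cast; ring
  rw [h2, Complex.exp_int_mul_two_pi_mul_I]
  simp



def echar (m n : ℤ) : ℝ → ℝ → ℂ := fun x y =>
  Complex.exp (((m : ℂ) * x + (n : ℂ) * y) * Complex.I)

lemma echar_per1 (m n : ℤ) : ∀ x y, echar m n (x + 2 * Real.pi) y = echar m n x y := by
  intro x y
  unfold echar
  push_cast
  rw [show ((m:ℂ) * (x + 2 * Real.pi) + n * y) * Complex.I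
      = ((m:ℂ) * x + n * y) * Complex.I + m * (2 * Real.pi * Complex.I) by ring]
  rw [Complex.exp_add, Complex.exp_int_mul_two_pi_mul_I, mul_one]

lemma echar_per2 (m n : ℤ) : ∀ x y, echar m n x (y + 2 * Real.pi) = echar m n x y := by
  intro x y
  unfold echar
  push_cast
  rw [show ((m:ℂ) * x + n * (y + 2 * Real.pi)) * Complex.I
      = ((m:ℂ) * x + n * y) * Complex.I + n * (2 * Real.pi * Complex.I) by ring]
  rw [Complex.exp_add, Complex.exp_int_mul_two_pi_mul_I, mul_one]

lemma echar_continuous (m n : ℤ) : Continuous (Function.uncurry (echar m n)) := by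
  apply Complex.continuous_exp.comp
  fun_prop

def χ (m n : ℤ) : C(T2, ℂ) :=
  ⟨lift2 (echar m n) (echar_per1 m n) (echar_per2 m n),
   lift2_continuous _ _ _ (echar_continuous m n)⟩

@[simp] lemma χ_coe (m n : ℤ) (x y : ℝ) : χ m n (↑x, ↑y) = echar m n x y := by
  simp [χ]

lemma T2_ext {u v : C(T2, ℂ)} (h : ∀ x y : ℝ, u (↑x, ↑y) = v (↑x, ↑y)) : u = v := by
  ext ⟨p, q⟩
  induction p using QuotientAddGroup.induction_on with
  | H x =>
    induction q using QuotientAddGroup.induction_on with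
    | H y => exact h x y

lemma χ_mul (m n m' n' : ℤ) : χ m n * χ m' n' = χ (m + m') (n + n') := by
  apply T2_ext
  intro x y
  simp only [ContinuousMap.mul_apply, χ_coe, echar]
  rw [← Complex.exp_add]
  congr 1
  push_cast
  ring

lemma χ_zero : χ 0 0 = 1 := by
  apply T2_ext
  intro x y
  simp [echar]

lemma χ_star (m n : ℤ) : star (χ m n) = χ (-m) (-n) := by
  apply T2_ext
  intro x y
  simp only [ContinuousMap.star_apply, χ_coe, echar]
  rw [show (star (Complex.exp ((↑m * ↑x + ↑n * ↑y) * Complex.I)) : ℂ)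
      = (starRingEnd ℂ) (Complex.exp ((↑m * ↑x + ↑n * ↑y) * Complex.I)) from rfl,
    ← Complex.exp_conj]
  congr 1
  simp only [map_mul, map_add, Complex.conj_I, Complex.conj_ofReal, map_intCast]
  push_cast
  ring



instance : Fact (0 < 2 * Real.pi) := ⟨by positivity⟩

def Iavg (g : C(T2, ℂ)) : ℂ :=
  (1 / (4 * Real.pi ^ 2) : ℝ) • ∫ x in (0:ℝ)..(2*Real.pi), ∫ y in (0:ℝ)..(2*Real.pi), g (↑x, ↑y)

def timeAvg (ω₁ ω₂ : ℝ) (g : C(T2, ℂ)) (T : ℝ) : ℂ :=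
  (1 / T : ℝ) • ∫ t in (0:ℝ)..T, g (↑(ω₁ * t), ↑(ω₂ * t))

lemma mk_cont : Continuous (fun x : ℝ => (↑x : AddCircle (2 * Real.pi))) :=
  continuous_quotient_mk'

lemma point_cont : Continuous (fun p : ℝ × ℝ => ((↑p.1, ↑p.2) : T2)) :=
  (mk_cont.comp continuous_fst).prodMk (mk_cont.comp continuous_snd)

lemma inner_cont (g : C(T2, ℂ)) :
    Continuous fun x : ℝ => ∫ y in (0:ℝ)..(2*Real.pi), g (↑x, ↑y) := by
  apply continuous_parametric_intervalIntegral_of_continuous' (f := fun (x y : ℝ) => g (↑x, ↑y))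
  exact g.continuous.comp point_cont

lemma inner_intble (g : C(T2, ℂ)) (x : ℝ) :
    IntervalIntegrable (fun y : ℝ => g (↑x, ↑y)) MeasureTheory.volume 0 (2*Real.pi) := by
  apply Continuous.intervalIntegrable
  exact g.continuous.comp ((continuous_const).prodMk (mk_cont.comp continuous_id))

lemma line_cont (ω₁ ω₂ : ℝ) (g : C(T2, ℂ)) :
    Continuous fun t : ℝ => g (↑(ω₁ * t), ↑(ω₂ * t)) := by
  have : Continuous fun t : ℝ => ((ω₁ * t, ω₂ * t) : ℝ × ℝ) := by fun_prop
  exact g.continuous.comp (point_cont.comp this)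

lemma Iavg_add (g h : C(T2, ℂ)) : Iavg (g + h) = Iavg g + Iavg h := by
  unfold Iavg
  rw [← smul_add]
  congr 1
  have : ∀ x : ℝ, (∫ y in (0:ℝ)..(2*Real.pi), (g + h) (↑x, ↑y))
      = (∫ y in (0:ℝ)..(2*Real.pi), g (↑x, ↑y)) + ∫ y in (0:ℝ)..(2*Real.pi), h (↑x, ↑y) := by
    intro x
    rw [← intervalIntegral.integral_add (inner_intble g x) (inner_intble h x)]
    simp
  simp_rw [this]
  rw [intervalIntegral.integral_add ((inner_cont g).intervalIntegrable _ _)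
    ((inner_cont h).intervalIntegrable _ _)]

lemma Iavg_smul (c : ℂ) (g : C(T2, ℂ)) : Iavg (c • g) = c • Iavg g := by
  unfold Iavg
  have : ∀ x : ℝ, (∫ y in (0:ℝ)..(2*Real.pi), (c • g) (↑x, ↑y))
      = c • ∫ y in (0:ℝ)..(2*Real.pi), g (↑x, ↑y) := by
    intro x
    rw [← intervalIntegral.integral_smul]
    simp
  simp_rw [this]
  rw [intervalIntegral.integral_smul, smul_comm]

lemma Iavg_norm_le (g : C(T2, ℂ)) : ‖Iavg g‖ ≤ ‖g‖ := by
  unfold Iavg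
  have hπ : (0:ℝ) < 2 * Real.pi := by positivity
  have hin : ∀ x : ℝ, ‖∫ y in (0:ℝ)..(2*Real.pi), g (↑x, ↑y)‖ ≤ ‖g‖ * |2*Real.pi - 0| := by
    intro x
    apply intervalIntegral.norm_integral_le_of_norm_le_const
    intro y _
    exact g.norm_coe_le_norm _
  have hout : ‖∫ x in (0:ℝ)..(2*Real.pi), ∫ y in (0:ℝ)..(2*Real.pi), g (↑x, ↑y)‖
      ≤ (‖g‖ * |2*Real.pi - 0|) * |2*Real.pi - 0| := by
    apply intervalIntegral.norm_integral_le_of_norm_le_const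
    intro x _
    exact hin x
  rw [norm_smul]
  have h1 : ‖(1 / (4 * Real.pi ^ 2) : ℝ)‖ = 1 / (4 * Real.pi ^ 2) := by
    rw [Real.norm_eq_abs, abs_of_pos (by positivity)]
  rw [h1]
  calc (1 / (4 * Real.pi ^ 2)) * ‖∫ x in (0:ℝ)..(2*Real.pi), ∫ y in (0:ℝ)..(2*Real.pi), g (↑x, ↑y)‖
      ≤ (1 / (4 * Real.pi ^ 2)) * ((‖g‖ * |2*Real.pi - 0|) * |2*Real.pi - 0|) := by
        gcongr
    _ = ‖g‖ := by
        rw [abs_of_pos (by linarith)]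
        field_simp
        ring

lemma timeAvg_norm_le (ω₁ ω₂ : ℝ) (g : C(T2, ℂ)) {T : ℝ} (hT : 0 < T) :
    ‖timeAvg ω₁ ω₂ g T‖ ≤ ‖g‖ := by
  unfold timeAvg
  rw [norm_smul, Real.norm_eq_abs, abs_of_pos (by positivity)]
  have : ‖∫ t in (0:ℝ)..T, g (↑(ω₁ * t), ↑(ω₂ * t))‖ ≤ ‖g‖ * |T - 0| := by
    apply intervalIntegral.norm_integral_le_of_norm_le_const
    intro t _
    exact g.norm_coe_le_norm _
  calc (1/T) * ‖∫ t in (0:ℝ)..T, g (↑(ω₁ * t), ↑(ω₂ * t))‖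
      ≤ (1/T) * (‖g‖ * |T - 0|) := by gcongr
    _ = ‖g‖ := by rw [abs_of_pos (by linarith)]; field_simp; ring

lemma timeAvg_sub (ω₁ ω₂ : ℝ) (g h : C(T2, ℂ)) (T : ℝ) :
    timeAvg ω₁ ω₂ (g - h) T = timeAvg ω₁ ω₂ g T - timeAvg ω₁ ω₂ h T := by
  unfold timeAvg
  rw [← smul_sub]
  congr 1
  rw [← intervalIntegral.integral_sub
    ((line_cont ω₁ ω₂ g).intervalIntegrable _ _)
    ((line_cont ω₁ ω₂ h).intervalIntegrable _ _)]
  simp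

lemma timeAvg_add (ω₁ ω₂ : ℝ) (g h : C(T2, ℂ)) (T : ℝ) :
    timeAvg ω₁ ω₂ (g + h) T = timeAvg ω₁ ω₂ g T + timeAvg ω₁ ω₂ h T := by
  unfold timeAvg
  rw [← smul_add]
  congr 1
  rw [← intervalIntegral.integral_add
    ((line_cont ω₁ ω₂ g).intervalIntegrable _ _)
    ((line_cont ω₁ ω₂ h).intervalIntegrable _ _)]
  simp

lemma timeAvg_smul (ω₁ ω₂ : ℝ) (c : ℂ) (g : C(T2, ℂ)) (T : ℝ) :
    timeAvg ω₁ ω₂ (c • g) T = c • timeAvg ω₁ ω₂ g T := by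
  unfold timeAvg
  rw [← intervalIntegral.integral_smul, smul_comm]
  simp



lemma freq_ne {ω₁ ω₂ : ℝ} (hω₁ : ω₁ ≠ 0) (hω₂ : ω₂ ≠ 0) (hirr : Irrational (ω₁ / ω₂))
    {m n : ℤ} (h : ¬(m = 0 ∧ n = 0)) : (m : ℝ) * ω₁ + n * ω₂ ≠ 0 := by
  intro heq
  rcases eq_or_ne m 0 with hm | hm
  · subst hm
    simp only [Int.cast_zero, zero_mul, zero_add, mul_eq_zero] at heq
    rcases heq with h' | h'
    · exact h ⟨rfl, by exact_mod_cast h'⟩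
    · exact hω₂ h'
  · apply hirr
    refine ⟨(-n : ℚ) / m, ?_⟩
    have hm' : (m : ℝ) ≠ 0 := by exact_mod_cast hm
    push_cast
    rw [div_eq_div_iff hm' hω₂]
    linarith [heq]

lemma echar_eq (m n : ℤ) (x y : ℝ) :
    echar m n x y = Complex.exp ((m:ℝ) * x * Complex.I) * Complex.exp ((n:ℝ) * y * Complex.I) := by
  unfold echar
  rw [← Complex.exp_add]
  congr 1
  push_cast
  ring

lemma Iavg_one : Iavg 1 = 1 := by
  unfold Iavg
  simp only [ContinuousMap.one_apply, intervalIntegral.integral_const]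
  rw [smul_smul, smul_smul]
  have hπ : Real.pi ≠ 0 := Real.pi_ne_zero
  rw [show (1 / (4 * Real.pi ^ 2) * (2 * Real.pi - 0) * (2 * Real.pi - 0) : ℝ) = 1 by
    field_simp; ring]
  exact one_smul _ _

lemma Iavg_char {m n : ℤ} (h : ¬(m = 0 ∧ n = 0)) : Iavg (χ m n) = 0 := by
  unfold Iavg
  simp_rw [χ_coe, echar_eq]
  rcases eq_or_ne n 0 with hn | hn
  · subst hn
    have hm : m ≠ 0 := fun hm => h ⟨hm, rfl⟩
    simp_rw [intervalIntegral.integral_const_mul]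
    have hinner : (∫ y in (0:ℝ)..(2*Real.pi), Complex.exp ((((0:ℤ):ℝ):ℂ) * y * Complex.I))
        = (2 * Real.pi : ℂ) := by
      norm_num
    rw [hinner, intervalIntegral.integral_mul_const, integral_exp_int m hm]
    simp
  · simp_rw [intervalIntegral.integral_const_mul, integral_exp_int n hn]
    simp

lemma timeAvg_char (ω₁ ω₂ : ℝ) (m n : ℤ) (T : ℝ) :
    timeAvg ω₁ ω₂ (χ m n) T
      = (1 / T : ℝ) • ∫ t in (0:ℝ)..T,
          Complex.exp (((m : ℝ) * ω₁ + n * ω₂ : ℝ) * t * Complex.I) := by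
  unfold timeAvg
  congr 1
  apply intervalIntegral.integral_congr
  intro t _
  simp only [χ_coe]
  unfold echar
  congr 1
  push_cast
  ring

lemma char_tendsto {ω₁ ω₂ : ℝ} (hω₁ : ω₁ ≠ 0) (hω₂ : ω₂ ≠ 0) (hirr : Irrational (ω₁ / ω₂))
    (m n : ℤ) :
    Tendsto (timeAvg ω₁ ω₂ (χ m n)) atTop (nhds (Iavg (χ m n))) := by
  by_cases h : m = 0 ∧ n = 0
  · obtain ⟨rfl, rfl⟩ := h
    rw [χ_zero, Iavg_one]
    apply Tendsto.congr' (f₁ := fun _ => (1:ℂ))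
    · filter_upwards [eventually_gt_atTop (0:ℝ)] with T hT
      unfold timeAvg
      simp only [ContinuousMap.one_apply, intervalIntegral.integral_const, sub_zero]
      rw [smul_smul, show (1 / T * T : ℝ) = 1 by field_simp, one_smul]
    · exact tendsto_const_nhds
  · rw [Iavg_char h]
    have := tendsto_avg_exp (freq_ne hω₁ hω₂ hirr h)
    apply this.congr
    intro T
    rw [timeAvg_char]

def M : Set C(T2, ℂ) := Set.range fun mn : ℤ × ℤ => χ mn.1 mn.2

lemma span_tendsto {ω₁ ω₂ : ℝ} (hω₁ : ω₁ ≠ 0) (hω₂ : ω₂ ≠ 0) (hirr : Irrational (ω₁ / ω₂))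
    {p : C(T2, ℂ)} (hp : p ∈ Submodule.span ℂ M) :
    Tendsto (timeAvg ω₁ ω₂ p) atTop (nhds (Iavg p)) := by
  induction hp using Submodule.span_induction with
  | mem x hx =>
    obtain ⟨⟨m, n⟩, rfl⟩ := hx
    exact char_tendsto hω₁ hω₂ hirr m n
  | zero =>
    have h0 : ∀ T, timeAvg ω₁ ω₂ 0 T = 0 := by
      intro T; unfold timeAvg; simp
    have h1 : Iavg (0 : C(T2, ℂ)) = 0 := by unfold Iavg; simp
    rw [h1]
    exact tendsto_const_nhds.congr fun T => (h0 T).symm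
  | add x y hx hy ihx ihy =>
    rw [Iavg_add]
    exact (ihx.add ihy).congr fun T => (timeAvg_add ω₁ ω₂ x y T).symm
  | smul c x hx ih =>
    rw [Iavg_smul]
    exact (ih.const_smul c).congr fun T => (timeAvg_smul ω₁ ω₂ c x T).symm



lemma closure_subset_M : (Submonoid.closure (M ∪ star M) : Set C(T2, ℂ)) ⊆ M := by
  intro x hx
  induction hx using Submonoid.closure_induction with
  | mem y hy =>
    rcases hy with hy | hy
    · exact hy
    · obtain ⟨⟨m, n⟩, hmn⟩ : star y ∈ M := hy
      simp only at hmn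
      refine ⟨(-m, -n), ?_⟩
      simp only
      rw [← χ_star, hmn, star_star]
  | one => exact ⟨(0, 0), χ_zero⟩
  | mul a b _ _ iha ihb =>
    obtain ⟨⟨m, n⟩, hab⟩ := iha
    obtain ⟨⟨m', n'⟩, hab'⟩ := ihb
    simp only at hab hab'
    exact ⟨(m + m', n + n'), by simp only; rw [← hab, ← hab', χ_mul]⟩

lemma adjoin_mem_span {p : C(T2, ℂ)} (hp : p ∈ StarAlgebra.adjoin ℂ M) :
    p ∈ Submodule.span ℂ M := by
  have h1 : p ∈ Subalgebra.toSubmodule (StarAlgebra.adjoin ℂ M).toSubalgebra := hp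
  rw [StarAlgebra.adjoin_eq_span] at h1
  exact Submodule.span_mono closure_subset_M h1

lemma coe_ne_exp {x z : ℝ} (h : (↑x : AddCircle (2 * Real.pi)) ≠ ↑z) :
    Complex.exp (x * Complex.I) ≠ Complex.exp (z * Complex.I) := by
  intro heq
  apply h
  rw [Complex.exp_eq_exp_iff_exists_int] at heq
  obtain ⟨k, hk⟩ := heq
  have hx : x = z + k * (2 * Real.pi) := by
    have := congrArg Complex.im hk
    simpa using this
  rw [hx]
  have : ((z + k * (2 * Real.pi) : ℝ) : AddCircle (2 * Real.pi)) = ↑z + ↑(k * (2 * Real.pi) : ℝ) := rfl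
  rw [this]
  have hmem : ((k * (2 * Real.pi) : ℝ) : AddCircle (2 * Real.pi)) = 0 := by
    rw [AddCircle.coe_eq_zero_iff]
    exact ⟨k, by rw [zsmul_eq_mul]⟩
  rw [hmem, add_zero]

lemma A_separates : (StarAlgebra.adjoin ℂ M).SeparatesPoints := by
  rintro ⟨a, b⟩ ⟨c, d⟩ hpq
  obtain ⟨x, rfl⟩ := QuotientAddGroup.mk_surjective a
  obtain ⟨y, rfl⟩ := QuotientAddGroup.mk_surjective b
  obtain ⟨z, rfl⟩ := QuotientAddGroup.mk_surjective c
  obtain ⟨w, rfl⟩ := QuotientAddGroup.mk_surjective d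
  have hor : ((x : AddCircle (2*Real.pi)) ≠ ↑z) ∨ ((y : AddCircle (2*Real.pi)) ≠ ↑w) := by
    by_contra hc
    push_neg at hc
    exact hpq (Prod.ext hc.1 hc.2)
  rcases hor with h | h
  · refine ⟨⇑(χ 1 0), ⟨χ 1 0, StarAlgebra.subset_adjoin ℂ M ⟨(1, 0), rfl⟩, rfl⟩, ?_⟩
    show χ 1 0 (↑x, ↑y) ≠ χ 1 0 (↑z, ↑w)
    simp only [χ_coe, echar]
    push_cast
    simp only [one_mul, zero_mul, add_zero]
    exact coe_ne_exp h
  · refine ⟨⇑(χ 0 1), ⟨χ 0 1, StarAlgebra.subset_adjoin ℂ M ⟨(0, 1), rfl⟩, rfl⟩, ?_⟩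
    show χ 0 1 (↑x, ↑y) ≠ χ 0 1 (↑z, ↑w)
    simp only [χ_coe, echar]
    push_cast
    simp only [one_mul, zero_mul, zero_add]
    exact coe_ne_exp h

lemma exists_approx (g : C(T2, ℂ)) {ε : ℝ} (hε : 0 < ε) :
    ∃ p ∈ Submodule.span ℂ M, ‖g - p‖ < ε := by
  have htop := ContinuousMap.starSubalgebra_topologicalClosure_eq_top_of_separatesPoints
    (StarAlgebra.adjoin ℂ M) A_separates
  have hg : g ∈ (StarAlgebra.adjoin ℂ M).topologicalClosure := by rw [htop]; trivial
  have hg' : g ∈ closure ((StarAlgebra.adjoin ℂ M) : Set C(T2, ℂ)) := hg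
  rw [Metric.mem_closure_iff] at hg'
  obtain ⟨p, hpA, hpd⟩ := hg' ε hε
  exact ⟨p, adjoin_mem_span hpA, by rwa [dist_eq_norm] at hpd⟩

lemma Iavg_sub (g h : C(T2, ℂ)) : Iavg (g - h) = Iavg g - Iavg h := by
  have : g - h = g + (-1 : ℂ) • h := by ext p; simp [sub_eq_add_neg]
  rw [this, Iavg_add, Iavg_smul]
  simp [sub_eq_add_neg]

theorem main_complex {ω₁ ω₂ : ℝ} (hω₁ : ω₁ ≠ 0) (hω₂ : ω₂ ≠ 0) (hirr : Irrational (ω₁ / ω₂))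
    (g : C(T2, ℂ)) :
    Tendsto (timeAvg ω₁ ω₂ g) atTop (nhds (Iavg g)) := by
  rw [Metric.tendsto_nhds]
  intro ε hε
  obtain ⟨p, hpM, hpn⟩ := exists_approx g (show (0:ℝ) < ε/4 by linarith)
  have hp := span_tendsto hω₁ hω₂ hirr hpM
  rw [Metric.tendsto_nhds] at hp
  filter_upwards [hp (ε/4) (by linarith), eventually_gt_atTop (0:ℝ)] with T h1 hT
  have e1 : dist (timeAvg ω₁ ω₂ g T) (timeAvg ω₁ ω₂ p T) < ε/4 := by
    rw [dist_eq_norm, ← timeAvg_sub]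
    calc ‖timeAvg ω₁ ω₂ (g - p) T‖ ≤ ‖g - p‖ := timeAvg_norm_le ω₁ ω₂ _ hT
      _ < ε/4 := hpn
  have e3 : dist (Iavg p) (Iavg g) < ε/4 := by
    rw [dist_eq_norm, ← Iavg_sub]
    calc ‖Iavg (p - g)‖ ≤ ‖p - g‖ := Iavg_norm_le _
      _ = ‖g - p‖ := by rw [norm_sub_rev]
      _ < ε/4 := hpn
  calc dist (timeAvg ω₁ ω₂ g T) (Iavg g)
      ≤ dist (timeAvg ω₁ ω₂ g T) (timeAvg ω₁ ω₂ p T) + dist (timeAvg ω₁ ω₂ p T) (Iavg p)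
        + dist (Iavg p) (Iavg g) := dist_triangle4 _ _ _ _
    _ < ε/4 + ε/4 + ε/4 := by gcongr
    _ < ε := by linarith


end TA

end TAhelp

/-- The time average of a quasi-periodic function with two rationally independent
frequencies equals its average over the 2-torus. -/
theorem time_average_eq_torus_average
    (ω₁ ω₂ : ℝ) (hω₁ : ω₁ ≠ 0) (hω₂ : ω₂ ≠ 0) (hirr : Irrational (ω₁ / ω₂))
    (f : ℝ → ℝ → ℝ) (hf : Continuous (Function.uncurry f))
    (hper₁ : ∀ x y, f (x + 2 * Real.pi) y = f x y)
    (hper₂ : ∀ x y, f x (y + 2 * Real.pi) = f x y) :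
    Tendsto (fun T : ℝ => (1 / T) * ∫ t in (0:ℝ)..T, f (ω₁ * t) (ω₂ * t)) atTop
      (nhds ((1 / (4 * Real.pi ^ 2)) *
        ∫ ψ₁ in (0:ℝ)..(2 * Real.pi), ∫ ψ₂ in (0:ℝ)..(2 * Real.pi), f ψ₁ ψ₂)) := by
  classical
  set F : ℝ → ℝ → ℂ := fun x y => (f x y : ℂ) with hFdef
  have h1 : ∀ x y, F (x + 2 * Real.pi) y = F x y := fun x y => by
    simp only [hFdef, hper₁]
  have h2 : ∀ x y, F x (y + 2 * Real.pi) = F x y := fun x y => by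
    simp only [hFdef, hper₂]
  have hFc : Continuous (Function.uncurry F) := Complex.continuous_ofReal.comp hf
  set G : C(TA.T2, ℂ) := ⟨TA.lift2 F h1 h2, TA.lift2_continuous F h1 h2 hFc⟩ with hGdef
  have hmain := TA.main_complex hω₁ hω₂ hirr G
  have hta : ∀ T : ℝ,
      TA.timeAvg ω₁ ω₂ G T = (((1 / T) * ∫ t in (0:ℝ)..T, f (ω₁ * t) (ω₂ * t) : ℝ) : ℂ) := by
    intro T
    unfold TA.timeAvg
    simp only [hGdef, ContinuousMap.coe_mk, TA.lift2_coe, hFdef]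
    rw [intervalIntegral.integral_ofReal, Complex.real_smul, ← Complex.ofReal_mul]
  have hIa : TA.Iavg G = (((1 / (4 * Real.pi ^ 2)) *
      ∫ ψ₁ in (0:ℝ)..(2 * Real.pi), ∫ ψ₂ in (0:ℝ)..(2 * Real.pi), f ψ₁ ψ₂ : ℝ) : ℂ) := by
    unfold TA.Iavg
    simp only [hGdef, ContinuousMap.coe_mk, TA.lift2_coe, hFdef]
    simp_rw [intervalIntegral.integral_ofReal]
    rw [Complex.real_smul, ← Complex.ofReal_mul]
  have hre : Tendsto (fun T => (TA.timeAvg ω₁ ω₂ G T).re) atTop (nhds ((TA.Iavg G).re)) :=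
    (Complex.continuous_re.tendsto _).comp hmain
  have hval : ((1 / (4 * Real.pi ^ 2)) *
      ∫ ψ₁ in (0:ℝ)..(2 * Real.pi), ∫ ψ₂ in (0:ℝ)..(2 * Real.pi), f ψ₁ ψ₂) = (TA.Iavg G).re := by
    rw [hIa, Complex.ofReal_re]
  rw [hval]
  exact hre.congr fun T => by rw [hta T, Complex.ofReal_re]
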